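/- Let G be a finite 5-regular simple graph on n vertices having an independent exact r-cover for every r ∈ {1,2,3,4,5}. Then 6048 divides n. -/
import Mathlib

open SimpleGraph

/-- `S` is an independent exact `r`-cover of `G`: `S` is independent and every vertex
outside `S` has exactly `r` neighbours in `S`. -/
def IsIndepExactCover {V : Type*} (G : SimpleGraph V) (r : ℕ) (S : Set V) : Prop :=
  (∀ x ∈ S, ∀ y ∈ S, ¬ G.Adj x y) ∧
  ∀ v ∉ S, (S ∩ G.neighborSet v).ncard = r

section Helpers

attribute [local instance] Classical.propDecidable

variable {V : Type*} [Fintype V] (G : SimpleGraph V)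

private lemma split_ncard (P U : Set V) : (P ∩ U).ncard + (P ∩ Uᶜ).ncard = P.ncard := by
  have := Set.ncard_inter_add_ncard_diff_eq_ncard P U (Set.toFinite P)
  rwa [Set.diff_eq] at this

/-- Double counting of edges between `P` and `Q`. -/
private lemma dc (P Q : Set V) :
    ∑ v ∈ (Set.toFinite P).toFinset, (Q ∩ G.neighborSet v).ncard
      = ∑ w ∈ (Set.toFinite Q).toFinset, (P ∩ G.neighborSet w).ncard := by
  have h := Finset.sum_card_bipartiteAbove_eq_sum_card_bipartiteBelow
    (r := G.Adj) (s := (Set.toFinite P).toFinset) (t := (Set.toFinite Q).toFinset)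
  have h1 : ∀ v : V, (Q ∩ G.neighborSet v).ncard
      = (((Set.toFinite Q).toFinset).bipartiteAbove G.Adj v).card := by
    intro v
    rw [Set.ncard_eq_toFinset_card _ (Set.toFinite (Q ∩ G.neighborSet v))]
    congr 1
    ext w
    simp only [Set.Finite.mem_toFinset, Set.mem_inter_iff, SimpleGraph.mem_neighborSet,
      Finset.mem_bipartiteAbove]
  have h2 : ∀ w : V, (P ∩ G.neighborSet w).ncard
      = (((Set.toFinite P).toFinset).bipartiteBelow G.Adj w).card := by
    intro w
    rw [Set.ncard_eq_toFinset_card _ (Set.toFinite (P ∩ G.neighborSet w))]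
    congr 1
    ext v
    simp only [Set.Finite.mem_toFinset, Set.mem_inter_iff, SimpleGraph.mem_neighborSet,
      Finset.mem_bipartiteBelow]
    rw [G.adj_comm]
  simp_rw [h1, h2]
  exact h

private lemma sum_const_ncard (P : Set V) (f : V → ℕ) (c : ℕ) (h : ∀ v ∈ P, f v = c) :
    ∑ v ∈ (Set.toFinite P).toFinset, f v = c * P.ncard := by
  rw [Finset.sum_congr rfl (fun v hv => h v ((Set.Finite.mem_toFinset _).mp hv)),
    Finset.sum_const, smul_eq_mul, Set.ncard_eq_toFinset_card _ (Set.toFinite P), mul_comm]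

/-- Double counting with constant degrees on both sides. -/
private lemma dc_const (P Q : Set V) (p q : ℕ)
    (hP : ∀ v ∈ P, (Q ∩ G.neighborSet v).ncard = p)
    (hQ : ∀ w ∈ Q, (P ∩ G.neighborSet w).ncard = q) :
    p * P.ncard = q * Q.ncard := by
  rw [← sum_const_ncard P _ p hP, ← sum_const_ncard Q _ q hQ]
  exact dc G P Q

variable {G}

omit [Fintype V] in
/-- Neighbours of a vertex of an independent set avoid it. -/
private lemma indep_nbr {r : ℕ} {S : Set V} (hS : IsIndepExactCover G r S) {v : V}
    (hv : v ∈ S) : G.neighborSet v ⊆ Sᶜ := by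
  intro w hw
  exact fun hwS => hS.1 v hv w hwS hw

private lemma five_cover_nbr (hreg : ∀ v : V, (G.neighborSet v).ncard = 5)
    {X : Set V} (hX : IsIndepExactCover G 5 X) {v : V} (hv : v ∉ X) :
    G.neighborSet v ⊆ X := by
  have h : X ∩ G.neighborSet v = G.neighborSet v := by
    exact Set.eq_of_subset_of_ncard_le Set.inter_subset_right
      (by rw [hreg v, hX.2 v hv]) (Set.toFinite _)
  rw [← h]
  exact Set.inter_subset_left

/-- size of a cover: `5 |S| = r |Sᶜ|`. -/
private lemma cover_size {r : ℕ} {S : Set V} (hreg : ∀ v : V, (G.neighborSet v).ncard = 5)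
    (hS : IsIndepExactCover G r S) : 5 * S.ncard = r * Sᶜ.ncard := by
  apply dc_const
  · intro v hv
    rw [Set.inter_eq_right.mpr (indep_nbr hS hv)]
    exact hreg v
  · intro w hw
    exact hS.2 w hw

/-- the bipartite split equation: `5 |S ∩ X| = r |Xᶜ ∩ Sᶜ|` whenever the neighbours of
vertices of `X` all lie outside `X` and neighbours of vertices outside `X` lie in `X`. -/
private lemma split_eq {r : ℕ} {S X : Set V} (hreg : ∀ v : V, (G.neighborSet v).ncard = 5)
    (hS : IsIndepExactCover G r S)
    (hXi : ∀ v ∈ X, G.neighborSet v ⊆ Xᶜ)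
    (hXc : ∀ v ∈ Xᶜ, G.neighborSet v ⊆ X) :
    5 * (S ∩ X).ncard = r * (Xᶜ ∩ Sᶜ).ncard := by
  apply dc_const
  · intro v hv
    have h1 : G.neighborSet v ⊆ Xᶜ ∩ Sᶜ := fun w hw =>
      ⟨hXi v hv.2 hw, indep_nbr hS hv.1 hw⟩
    rw [Set.inter_eq_right.mpr h1]
    exact hreg v
  · intro w hw
    have h1 : S ∩ G.neighborSet w = (S ∩ X) ∩ G.neighborSet w := by
      ext u
      simp only [Set.mem_inter_iff]
      exact ⟨fun h => ⟨⟨h.1, hXc w hw.1 h.2⟩, h.2⟩, fun h => ⟨h.1.1, h.2⟩⟩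
    rw [← h1]
    exact hS.2 w hw.2

/-- The main bipartite-refined equation:
`5 |S∩T∩X| + 5 |S∩Tᶜ∩X| = r₁ |Sᶜ∩Tᶜ∩Xᶜ| + r₂ |S∩Tᶜ∩X|`. -/
private lemma main_eq {r1 r2 : ℕ} {S T X : Set V} (hreg : ∀ v : V, (G.neighborSet v).ncard = 5)
    (hS : IsIndepExactCover G r1 S) (hT : IsIndepExactCover G r2 T)
    (hXi : ∀ v ∈ X, G.neighborSet v ⊆ Xᶜ)
    (hXc : ∀ v ∈ Xᶜ, G.neighborSet v ⊆ X) :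
    5 * (S ∩ T ∩ X).ncard + 5 * (S ∩ Tᶜ ∩ X).ncard
      = r1 * (Sᶜ ∩ Tᶜ ∩ Xᶜ).ncard + r2 * (S ∩ Tᶜ ∩ X).ncard := by
  set AX := S ∩ T ∩ X with hAX
  set BX := S ∩ Tᶜ ∩ X with hBX
  set DY := Sᶜ ∩ Tᶜ ∩ Xᶜ with hDY
  -- step: over DY, S-neighbours split into AX and BX
  have hsplit : ∀ w ∈ DY, (S ∩ G.neighborSet w).ncard
      = (AX ∩ G.neighborSet w).ncard + (BX ∩ G.neighborSet w).ncard := by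
    intro w hw
    have hsub : G.neighborSet w ⊆ X := hXc w hw.2
    have hu : S ∩ G.neighborSet w = (AX ∩ G.neighborSet w) ∪ (BX ∩ G.neighborSet w) := by
      ext u
      simp only [hAX, hBX, Set.mem_inter_iff, Set.mem_union, Set.mem_compl_iff]
      constructor
      · rintro ⟨h1, h2⟩
        by_cases hT' : u ∈ T
        · exact Or.inl ⟨⟨⟨h1, hT'⟩, hsub h2⟩, h2⟩
        · exact Or.inr ⟨⟨⟨h1, hT'⟩, hsub h2⟩, h2⟩
      · rintro (⟨⟨⟨h1, _⟩, _⟩, h2⟩ | ⟨⟨⟨h1, _⟩, _⟩, h2⟩) <;> exact ⟨h1, h2⟩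
    have hdisj : Disjoint (AX ∩ G.neighborSet w) (BX ∩ G.neighborSet w) := by
      rw [Set.disjoint_left]
      rintro u ⟨⟨⟨_, h1⟩, _⟩, _⟩ ⟨⟨⟨_, h2⟩, _⟩, _⟩
      exact h2 h1
    rw [hu, Set.ncard_union_eq hdisj (Set.toFinite _) (Set.toFinite _)]
  -- left double counting: r1 * |DY| = Σ over DY
  have h1 : r1 * DY.ncard = ∑ w ∈ (Set.toFinite DY).toFinset, (S ∩ G.neighborSet w).ncard :=
    (sum_const_ncard DY _ r1 (fun w hw => hS.2 w hw.1.1)).symm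
  have h2 : ∑ w ∈ (Set.toFinite DY).toFinset, (S ∩ G.neighborSet w).ncard
      = ∑ w ∈ (Set.toFinite DY).toFinset, (AX ∩ G.neighborSet w).ncard
        + ∑ w ∈ (Set.toFinite DY).toFinset, (BX ∩ G.neighborSet w).ncard := by
    rw [← Finset.sum_add_distrib]
    exact Finset.sum_congr rfl (fun w hw => hsplit w ((Set.Finite.mem_toFinset _).mp hw))
  -- AX part is constant 5
  have h3 : ∑ w ∈ (Set.toFinite DY).toFinset, (AX ∩ G.neighborSet w).ncard = 5 * AX.ncard := by
    rw [← dc G AX DY]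
    apply sum_const_ncard
    intro v hv
    have hsub : G.neighborSet v ⊆ DY := by
      intro u hu
      exact ⟨⟨indep_nbr hS hv.1.1 hu, indep_nbr hT hv.1.2 hu⟩, hXi v hv.2 hu⟩
    rw [Set.inter_eq_right.mpr hsub]
    exact hreg v
  -- BX part : (DY ∩ N v).ncard + r2 = 5 for v ∈ BX
  have h4 : ∀ v ∈ BX, (DY ∩ G.neighborSet v).ncard + r2 = 5 := by
    intro v hv
    have hDYeq : DY ∩ G.neighborSet v = (G.neighborSet v) ∩ Tᶜ := by
      ext u
      simp only [hDY, Set.mem_inter_iff, Set.mem_compl_iff]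
      constructor
      · rintro ⟨⟨⟨_, ht⟩, _⟩, h3⟩
        exact ⟨h3, ht⟩
      · rintro ⟨h3, h2⟩
        exact ⟨⟨⟨indep_nbr hS hv.1.1 h3, h2⟩, hXi v hv.2 h3⟩, h3⟩
    have hT' : (T ∩ G.neighborSet v).ncard = r2 := hT.2 v hv.1.2
    have hsplit2 := split_ncard (V := V) (G.neighborSet v) T
    rw [Set.inter_comm] at hT'
    rw [hreg v] at hsplit2
    rw [hDYeq]
    omega
  have h5 : ∑ v ∈ (Set.toFinite BX).toFinset, ((DY ∩ G.neighborSet v).ncard + r2)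
      = 5 * BX.ncard := sum_const_ncard BX _ 5 h4
  rw [Finset.sum_add_distrib, Finset.sum_const, smul_eq_mul,
    ← Set.ncard_eq_toFinset_card _ (Set.toFinite BX), mul_comm BX.ncard r2] at h5
  have h6 : ∑ w ∈ (Set.toFinite DY).toFinset, (BX ∩ G.neighborSet w).ncard
      = ∑ v ∈ (Set.toFinite BX).toFinset, (DY ∩ G.neighborSet v).ncard := (dc G BX DY).symm
  omega

private lemma part_ncard (S T W : Set V) :
    (S ∩ T ∩ W).ncard + (S ∩ Tᶜ ∩ W).ncard + (Sᶜ ∩ T ∩ W).ncard + (Sᶜ ∩ Tᶜ ∩ W).ncard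
      = W.ncard := by
  have h1 := split_ncard (V := V) W S
  have h2 := split_ncard (V := V) (W ∩ S) T
  have h3 := split_ncard (V := V) (W ∩ Sᶜ) T
  have e1 : W ∩ S ∩ T = S ∩ T ∩ W := by ext u; simp only [Set.mem_inter_iff]; tauto
  have e2 : W ∩ S ∩ Tᶜ = S ∩ Tᶜ ∩ W := by ext u; simp only [Set.mem_inter_iff]; tauto
  have e3 : W ∩ Sᶜ ∩ T = Sᶜ ∩ T ∩ W := by ext u; simp only [Set.mem_inter_iff]; tauto
  have e4 : W ∩ Sᶜ ∩ Tᶜ = Sᶜ ∩ Tᶜ ∩ W := by ext u; simp only [Set.mem_inter_iff]; tauto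
  rw [e1, e2] at h2
  rw [e3, e4] at h3
  omega

/-- For a pair of covers with parameters `r1, r2` together with a `5`-cover,
all the region cardinalities satisfy the linear system. -/
private lemma system {r1 r2 : ℕ} (n : ℕ) (hn : Fintype.card V = n)
    (hreg : ∀ v : V, (G.neighborSet v).ncard = 5)
    {S T X : Set V}
    (hS : IsIndepExactCover G r1 S) (hT : IsIndepExactCover G r2 T)
    (hX : IsIndepExactCover G 5 X) :
    ∃ aX aY bX bY cX cY dX dY x y sX sY tX tY : ℕ,
      x + y = n ∧ 5 * x = 5 * y ∧
      aX + bX + cX + dX = x ∧ aY + bY + cY + dY = y ∧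
      sX = aX + bX ∧ sY = aY + bY ∧ tX = aX + cX ∧ tY = aY + cY ∧
      5 * sX + r1 * sY = r1 * y ∧ 5 * sY + r1 * sX = r1 * x ∧
      5 * tX + r2 * tY = r2 * y ∧ 5 * tY + r2 * tX = r2 * x ∧
      5 * aX + 5 * bX = r1 * dY + r2 * bX ∧
      5 * aY + 5 * bY = r1 * dX + r2 * bY ∧
      5 * aX + 5 * cX = r2 * dY + r1 * cX ∧
      5 * aY + 5 * cY = r2 * dX + r1 * cY := by
  classical
  have hXi : ∀ v ∈ X, G.neighborSet v ⊆ Xᶜ := fun v hv => indep_nbr hX hv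
  have hXc : ∀ v ∈ Xᶜ, G.neighborSet v ⊆ X := fun v hv => five_cover_nbr hreg hX hv
  have hYi : ∀ v ∈ Xᶜ, G.neighborSet v ⊆ Xᶜᶜ := by
    intro v hv u hu
    rw [compl_compl]
    exact hXc v hv hu
  have hYc : ∀ v ∈ Xᶜᶜ, G.neighborSet v ⊆ Xᶜ := fun v hv =>
    hXi v (by rwa [compl_compl] at hv)
  refine ⟨(S ∩ T ∩ X).ncard, (S ∩ T ∩ Xᶜ).ncard, (S ∩ Tᶜ ∩ X).ncard, (S ∩ Tᶜ ∩ Xᶜ).ncard,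
    (Sᶜ ∩ T ∩ X).ncard, (Sᶜ ∩ T ∩ Xᶜ).ncard, (Sᶜ ∩ Tᶜ ∩ X).ncard, (Sᶜ ∩ Tᶜ ∩ Xᶜ).ncard,
    X.ncard, Xᶜ.ncard, (S ∩ X).ncard, (S ∩ Xᶜ).ncard, (T ∩ X).ncard, (T ∩ Xᶜ).ncard,
    ?_, ?_, ?_, ?_, ?_, ?_, ?_, ?_, ?_, ?_, ?_, ?_, ?_, ?_, ?_, ?_⟩
  · rw [← hn, ← Nat.card_eq_fintype_card]
    exact Set.ncard_add_ncard_compl X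
  · exact cover_size hreg hX
  · exact part_ncard S T X
  · exact part_ncard S T Xᶜ
  · have h := split_ncard (V := V) (S ∩ X) T
    have e1 : S ∩ X ∩ T = S ∩ T ∩ X := by ext u; simp only [Set.mem_inter_iff]; tauto
    have e2 : S ∩ X ∩ Tᶜ = S ∩ Tᶜ ∩ X := by
      ext u; simp only [Set.mem_inter_iff, Set.mem_compl_iff]; tauto
    rw [e1, e2] at h
    omega
  · have h := split_ncard (V := V) (S ∩ Xᶜ) T
    have e1 : S ∩ Xᶜ ∩ T = S ∩ T ∩ Xᶜ := by
      ext u; simp only [Set.mem_inter_iff, Set.mem_compl_iff]; tauto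
    have e2 : S ∩ Xᶜ ∩ Tᶜ = S ∩ Tᶜ ∩ Xᶜ := by
      ext u; simp only [Set.mem_inter_iff, Set.mem_compl_iff]; tauto
    rw [e1, e2] at h
    omega
  · have h := split_ncard (V := V) (T ∩ X) S
    have e1 : T ∩ X ∩ S = S ∩ T ∩ X := by ext u; simp only [Set.mem_inter_iff]; tauto
    have e2 : T ∩ X ∩ Sᶜ = Sᶜ ∩ T ∩ X := by
      ext u; simp only [Set.mem_inter_iff, Set.mem_compl_iff]; tauto
    rw [e1, e2] at h
    omega
  · have h := split_ncard (V := V) (T ∩ Xᶜ) S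
    have e1 : T ∩ Xᶜ ∩ S = S ∩ T ∩ Xᶜ := by
      ext u; simp only [Set.mem_inter_iff, Set.mem_compl_iff]; tauto
    have e2 : T ∩ Xᶜ ∩ Sᶜ = Sᶜ ∩ T ∩ Xᶜ := by
      ext u; simp only [Set.mem_inter_iff, Set.mem_compl_iff]; tauto
    rw [e1, e2] at h
    omega
  · -- 5 sX + r1 sY = r1 y
    have h := split_eq hreg hS hXi hXc
    have h2 := split_ncard (V := V) Xᶜ S
    rw [Set.inter_comm Xᶜ S] at h2
    rw [h, ← Nat.mul_add, add_comm ((Xᶜ ∩ Sᶜ).ncard) ((S ∩ Xᶜ).ncard), h2]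
  · have h := split_eq hreg hS hYi hYc
    rw [compl_compl] at h
    have h2 := split_ncard (V := V) X S
    rw [Set.inter_comm X S] at h2
    rw [h, ← Nat.mul_add, add_comm ((X ∩ Sᶜ).ncard) ((S ∩ X).ncard), h2]
  · have h := split_eq hreg hT hXi hXc
    have h2 := split_ncard (V := V) Xᶜ T
    rw [Set.inter_comm Xᶜ T] at h2
    rw [h, ← Nat.mul_add, add_comm ((Xᶜ ∩ Tᶜ).ncard) ((T ∩ Xᶜ).ncard), h2]
  · have h := split_eq hreg hT hYi hYc
    rw [compl_compl] at h
    have h2 := split_ncard (V := V) X T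
    rw [Set.inter_comm X T] at h2
    rw [h, ← Nat.mul_add, add_comm ((X ∩ Tᶜ).ncard) ((T ∩ X).ncard), h2]
  · exact main_eq hreg hS hT hXi hXc
  · have h := main_eq hreg hS hT hYi hYc
    rw [compl_compl] at h
    exact h
  · have h := main_eq hreg hT hS hXi hXc
    have e1 : T ∩ S ∩ X = S ∩ T ∩ X := by ext u; simp only [Set.mem_inter_iff]; tauto
    have e2 : T ∩ Sᶜ ∩ X = Sᶜ ∩ T ∩ X := by
      ext u; simp only [Set.mem_inter_iff, Set.mem_compl_iff]; tauto
    have e3 : Tᶜ ∩ Sᶜ ∩ Xᶜ = Sᶜ ∩ Tᶜ ∩ Xᶜ := by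
      ext u; simp only [Set.mem_inter_iff, Set.mem_compl_iff]; tauto
    rw [e1, e2, e3] at h
    exact h
  · have h := main_eq hreg hT hS hYi hYc
    rw [compl_compl] at h
    have e1 : T ∩ S ∩ Xᶜ = S ∩ T ∩ Xᶜ := by
      ext u; simp only [Set.mem_inter_iff, Set.mem_compl_iff]; tauto
    have e2 : T ∩ Sᶜ ∩ Xᶜ = Sᶜ ∩ T ∩ Xᶜ := by
      ext u; simp only [Set.mem_inter_iff, Set.mem_compl_iff]; tauto
    have e3 : Tᶜ ∩ Sᶜ ∩ X = Sᶜ ∩ Tᶜ ∩ X := by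
      ext u; simp only [Set.mem_inter_iff, Set.mem_compl_iff]; tauto
    rw [e1, e2, e3] at h
    exact h

end Helpers

theorem stmt_8 {V : Type*} [Fintype V] (G : SimpleGraph V) (n : ℕ)
    (hn : Fintype.card V = n)
    (hreg : ∀ v : V, (G.neighborSet v).ncard = 5)
    (hcov : ∀ r, 1 ≤ r → r ≤ 5 → ∃ S : Set V, IsIndepExactCover G r S) :
    6048 ∣ n := by
  classical
  obtain ⟨S1, hS1⟩ := hcov 1 (by norm_num) (by norm_num)
  obtain ⟨S2, hS2⟩ := hcov 2 (by norm_num) (by norm_num)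
  obtain ⟨S3, hS3⟩ := hcov 3 (by norm_num) (by norm_num)
  obtain ⟨S4, hS4⟩ := hcov 4 (by norm_num) (by norm_num)
  obtain ⟨S5, hS5⟩ := hcov 5 (by norm_num) (by norm_num)
  -- 7 ∣ n from the 2-cover
  have h7 : 7 ∣ n := by
    have h := cover_size hreg hS2
    have h2 := Set.ncard_add_ncard_compl S2
    rw [Nat.card_eq_fintype_card, hn] at h2
    omega
  -- 32 ∣ n from the (1,3,5) system
  have h32 : 32 ∣ n := by
    obtain ⟨aX, aY, bX, bY, cX, cY, dX, dY, x, y, sX, sY, tX, tY,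
      e1, e2, e3, e4, e5, e6, e7, e8, e9, e10, e11, e12, e13, e14, e15, e16⟩ :=
      system n hn hreg hS1 hS3 hS5
    have f1 : (x:ℤ) + y = n := by exact_mod_cast e1
    have f2 : 5*(x:ℤ) = 5*y := by exact_mod_cast e2
    have f3 : (aX:ℤ) + bX + cX + dX = x := by exact_mod_cast e3
    have f4 : (aY:ℤ) + bY + cY + dY = y := by exact_mod_cast e4
    have f5 : (sX:ℤ) = aX + bX := by exact_mod_cast e5
    have f6 : (sY:ℤ) = aY + bY := by exact_mod_cast e6
    have f7 : (tX:ℤ) = aX + cX := by exact_mod_cast e7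
    have f8 : (tY:ℤ) = aY + cY := by exact_mod_cast e8
    have f9 : 5*(sX:ℤ) + 1*sY = 1*y := by exact_mod_cast e9
    have f10 : 5*(sY:ℤ) + 1*sX = 1*x := by exact_mod_cast e10
    have f11 : 5*(tX:ℤ) + 3*tY = 3*y := by exact_mod_cast e11
    have f12 : 5*(tY:ℤ) + 3*tX = 3*x := by exact_mod_cast e12
    have f13 : 5*(aX:ℤ) + 5*bX = 1*dY + 3*bX := by exact_mod_cast e13
    have f14 : 5*(aY:ℤ) + 5*bY = 1*dX + 3*bY := by exact_mod_cast e14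
    have key : 160*(aX:ℤ) = 5*(n:ℤ) := by
      linear_combination 5*f1 - 9*f2 + 20*f3 + 60*f4 + 140*f5 + 100*f6 + 20*f7 + 60*f8
        - 25*f9 - 15*f10 + 5*f11 - 15*f12 + 60*f13 + 20*f14
    have key2 : (32:ℤ) ∣ (n:ℤ) := ⟨aX, by linarith⟩
    exact_mod_cast key2
  -- 27 ∣ n from the (1,4,5) system
  have h27 : 27 ∣ n := by
    obtain ⟨aX, aY, bX, bY, cX, cY, dX, dY, x, y, sX, sY, tX, tY,
      e1, e2, e3, e4, e5, e6, e7, e8, e9, e10, e11, e12, e13, e14, e15, e16⟩ :=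
      system n hn hreg hS1 hS4 hS5
    have f1 : (x:ℤ) + y = n := by exact_mod_cast e1
    have f2 : 5*(x:ℤ) = 5*y := by exact_mod_cast e2
    have f3 : (aX:ℤ) + bX + cX + dX = x := by exact_mod_cast e3
    have f4 : (aY:ℤ) + bY + cY + dY = y := by exact_mod_cast e4
    have f5 : (sX:ℤ) = aX + bX := by exact_mod_cast e5
    have f6 : (sY:ℤ) = aY + bY := by exact_mod_cast e6
    have f7 : (tX:ℤ) = aX + cX := by exact_mod_cast e7
    have f8 : (tY:ℤ) = aY + cY := by exact_mod_cast e8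
    have f9 : 5*(sX:ℤ) + 1*sY = 1*y := by exact_mod_cast e9
    have f10 : 5*(sY:ℤ) + 1*sX = 1*x := by exact_mod_cast e10
    have f11 : 5*(tX:ℤ) + 4*tY = 4*y := by exact_mod_cast e11
    have f12 : 5*(tY:ℤ) + 4*tX = 4*x := by exact_mod_cast e12
    have f13 : 5*(aX:ℤ) + 5*bX = 1*dY + 4*bX := by exact_mod_cast e13
    have f14 : 5*(aY:ℤ) + 5*bY = 1*dX + 4*bY := by exact_mod_cast e14
    have f15 : 5*(aX:ℤ) + 5*cX = 4*dY + 1*cX := by exact_mod_cast e15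
    have f16 : 5*(aY:ℤ) + 5*cY = 4*dX + 1*cY := by exact_mod_cast e16
    have key : 270*(aX:ℤ) = 10*(n:ℤ) := by
      linear_combination 10*f1 - 27*f2 + 18*f3 + 72*f4 + 90*f5 + 90*f6 + 18*f7 + 72*f8
        - 15*f9 - 15*f10 + 22*f11 - 32*f12 + 72*f13 + 18*f14
    have key2 : (27:ℤ) ∣ (n:ℤ) := ⟨aX, by linarith⟩
    exact_mod_cast key2
  have h864 : 32 * 27 ∣ n := Nat.Coprime.mul_dvd_of_dvd_of_dvd (by norm_num) h32 h27
  have h6048 : (32 * 27) * 7 ∣ n :=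
    Nat.Coprime.mul_dvd_of_dvd_of_dvd (by norm_num) h864 h7
  simpa using h6048
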